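/- Let n ≥ 1, let η_min ∈ ℝ, λ ≥ 0 with η_min + λ > 0, and let ω ≥ 0, e ≥ 0, ψ ≥ 0, σ > 0, B > 0, B_L ≥ 0, d ≥ 1. Let Y ∈ {−1, 1}^n, let k, k̃ ∈ ℝ^n satisfy |k_i| ≤ ω for all i ∈ [n] and ‖k̃ − k‖_2 ≤ 2√n σ² B³ √d B_L, and let K, K̃ be real symmetric n×n matrices with K ⪰ η_min I_n, K̃ ⪰ η_min I_n, and ‖K − K̃‖ ≤ ψ, where ‖·‖ is the spectral norm. Then |(1/n) k̃^⊤ (K̃ + λI_n)^{-1} Y − (1/n) k^⊤ (K + λI_n)^{-1} Y| ≤ 2σ²B³√d B_L / (η_min + λ) + ω ψ / (η_min + λ)². -/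

import Mathlib

set_option maxHeartbeats 1000000
set_option synthInstance.maxHeartbeats 400000


open Matrix
/-- Spectral (ℓ₂ operator) norm of a real matrix. -/
noncomputable def sNorm {n : ℕ} (A : Matrix (Fin n) (Fin n) ℝ) : ℝ :=
  ‖Matrix.toEuclideanCLM (𝕜 := ℝ) A‖

/-- Euclidean norm on `Fin n → ℝ`. -/
noncomputable def l2 {n : ℕ} (u : Fin n → ℝ) : ℝ := Real.sqrt (∑ s, u s ^ 2)

lemma l2_nonneg {n : ℕ} (u : Fin n → ℝ) : 0 ≤ l2 u := Real.sqrt_nonneg _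

lemma l2_eq_norm {n : ℕ} (u : Fin n → ℝ) :
    l2 u = ‖(WithLp.equiv 2 (Fin n → ℝ)).symm u‖ := by
  rw [EuclideanSpace.norm_eq]
  simp [l2, Real.norm_eq_abs, sq_abs]

lemma abs_dot_le {n : ℕ} (u v : Fin n → ℝ) : |u ⬝ᵥ v| ≤ l2 u * l2 v := by
  have h := Finset.sum_mul_sq_le_sq_mul_sq Finset.univ u v
  have h2 : |u ⬝ᵥ v| = Real.sqrt ((∑ i, u i * v i) ^ 2) := by
    rw [Real.sqrt_sq_eq_abs]; rfl
  rw [h2]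
  calc Real.sqrt ((∑ i, u i * v i) ^ 2)
      ≤ Real.sqrt ((∑ i, u i ^ 2) * ∑ i, v i ^ 2) := Real.sqrt_le_sqrt h
    _ = l2 u * l2 v := by
        rw [Real.sqrt_mul (by positivity)]; rfl

lemma l2_mulVec_le {n : ℕ} (A : Matrix (Fin n) (Fin n) ℝ) (v : Fin n → ℝ) :
    l2 (A *ᵥ v) ≤ sNorm A * l2 v := by
  rw [l2_eq_norm, l2_eq_norm, sNorm]
  have h := (Matrix.toEuclideanCLM (𝕜 := ℝ) A).le_opNorm
    ((WithLp.equiv 2 (Fin n → ℝ)).symm v)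
  simpa [WithLp.equiv_symm_apply, Matrix.toEuclideanCLM_toLp, Matrix.toLin'_apply] using h

lemma smul_one_posDef {n : ℕ} {c : ℝ} (hc : 0 < c) :
    (c • (1 : Matrix (Fin n) (Fin n) ℝ)).PosDef := by
  have h : (c • (1 : Matrix (Fin n) (Fin n) ℝ)) = Matrix.diagonal (fun _ => c) := by
    ext i j
    by_cases hij : i = j <;>
      simp [Matrix.one_apply, Matrix.diagonal_apply, hij]
  rw [h]
  exact Matrix.posDef_diagonal_iff.mpr (fun _ => hc)

lemma dot_self_eq_sq {n : ℕ} (w : Fin n → ℝ) : w ⬝ᵥ w = (l2 w) ^ 2 := by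
  rw [l2, Real.sq_sqrt (by positivity)]
  simp [dotProduct, pow_two]

lemma inv_bound {n : ℕ} {c : ℝ} (hc : 0 < c) (M : Matrix (Fin n) (Fin n) ℝ)
    (hlow : (M - c • (1 : Matrix (Fin n) (Fin n) ℝ)).PosSemidef) :
    IsUnit M.det ∧ ∀ v : Fin n → ℝ, l2 (M⁻¹ *ᵥ v) ≤ l2 v / c := by
  have hMpd : M.PosDef := by
    have h := Matrix.PosDef.posSemidef_add hlow (smul_one_posDef hc)
    simpa using h
  have hdet : IsUnit M.det := hMpd.det_pos.ne'.isUnit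
  refine ⟨hdet, fun v => ?_⟩
  set w := M⁻¹ *ᵥ v with hw
  have hMw : M *ᵥ w = v := by
    rw [hw, Matrix.mulVec_mulVec, Matrix.mul_nonsing_inv _ hdet, Matrix.one_mulVec]
  have h1 : 0 ≤ w ⬝ᵥ ((M - c • 1) *ᵥ w) := by
    have := hlow.dotProduct_mulVec_nonneg w; simpa using this
  have h2 : c * (w ⬝ᵥ w) ≤ w ⬝ᵥ v := by
    have hexp : w ⬝ᵥ ((M - c • 1) *ᵥ w)
        = w ⬝ᵥ (M *ᵥ w) - c * (w ⬝ᵥ w) := by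
      rw [Matrix.sub_mulVec, dotProduct_sub, Matrix.smul_mulVec,
        Matrix.one_mulVec, dotProduct_smul, smul_eq_mul]
    rw [hexp, hMw] at h1
    linarith
  have hCS : w ⬝ᵥ v ≤ l2 w * l2 v := le_trans (le_abs_self _) (abs_dot_le w v)
  have hsq := dot_self_eq_sq w
  rcases (l2_nonneg w).lt_or_eq with h0 | h0
  · rw [le_div_iff₀ hc]
    nlinarith
  · rw [← h0]; exact div_nonneg (l2_nonneg v) hc.le

/-- deterministic utility bound for private NTK regression.
With `f_K(x) = (1/n) kᵀ (K + λI)⁻¹ Y` and privatized counterparts `k̃, K̃`,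
`|f_K̃(x) − f_K(x)| ≤ 2σ²B³√d B_L/(η_min + λ) + ω ψ/(η_min + λ)²`. -/
theorem ntk_regression_utility {n : ℕ} (hn : 1 ≤ n)
    (ηmin lam ω e ψ σ B BL : ℝ) (d : ℕ)
    (hpos : 0 < ηmin + lam) (hlam : 0 ≤ lam)
    (hω : 0 ≤ ω) (he : 0 ≤ e) (hψ : 0 ≤ ψ) (hσ : 0 < σ) (hB : 0 < B)
    (hBL : 0 ≤ BL) (hd : 1 ≤ d)
    (Y : Fin n → ℝ) (hY : ∀ i, Y i = -1 ∨ Y i = 1)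
    (k kt : Fin n → ℝ) (hk : ∀ i, |k i| ≤ ω)
    (hkt : l2 (kt - k) ≤ 2 * Real.sqrt n * σ ^ 2 * B ^ 3 * Real.sqrt d * BL)
    (K Kt : Matrix (Fin n) (Fin n) ℝ) (hKs : K.IsSymm) (hKts : Kt.IsSymm)
    (hKlow : (K - ηmin • (1 : Matrix (Fin n) (Fin n) ℝ)).PosSemidef)
    (hKtlow : (Kt - ηmin • (1 : Matrix (Fin n) (Fin n) ℝ)).PosSemidef)
    (hKdiff : sNorm (K - Kt) ≤ ψ) :
    |(1 / (n : ℝ)) * (kt ⬝ᵥ ((Kt + lam • (1 : Matrix (Fin n) (Fin n) ℝ))⁻¹ *ᵥ Y)) -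
        (1 / (n : ℝ)) * (k ⬝ᵥ ((K + lam • (1 : Matrix (Fin n) (Fin n) ℝ))⁻¹ *ᵥ Y))| ≤
      2 * σ ^ 2 * B ^ 3 * Real.sqrt d * BL / (ηmin + lam) +
        ω * ψ / (ηmin + lam) ^ 2 := by
  set c : ℝ := ηmin + lam with hc
  set M : Matrix (Fin n) (Fin n) ℝ := K + lam • 1 with hM
  set Mt : Matrix (Fin n) (Fin n) ℝ := Kt + lam • 1 with hMt
  have hMlow : (M - c • (1 : Matrix (Fin n) (Fin n) ℝ)).PosSemidef := by
    have he : M - c • (1 : Matrix (Fin n) (Fin n) ℝ) = K - ηmin • 1 := by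
      rw [hM, hc, add_smul]; abel
    rw [he]; exact hKlow
  have hMtlow : (Mt - c • (1 : Matrix (Fin n) (Fin n) ℝ)).PosSemidef := by
    have he : Mt - c • (1 : Matrix (Fin n) (Fin n) ℝ) = Kt - ηmin • 1 := by
      rw [hMt, hc, add_smul]; abel
    rw [he]; exact hKtlow
  obtain ⟨hdet, hinv⟩ := inv_bound hpos M hMlow
  obtain ⟨hdett, hinvt⟩ := inv_bound hpos Mt hMtlow
  set w : Fin n → ℝ := M⁻¹ *ᵥ Y with hwdef
  set wt : Fin n → ℝ := Mt⁻¹ *ᵥ Y with hwtdef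
  have hn0 : (0 : ℝ) < n := by exact_mod_cast hn
  have hnn : Real.sqrt n * Real.sqrt n = (n : ℝ) :=
    Real.mul_self_sqrt (by positivity)
  have hl2Y : l2 Y = Real.sqrt n := by
    have : ∑ s, Y s ^ 2 = (n : ℝ) := by
      have h1 : ∀ s, Y s ^ 2 = 1 := by
        intro s; rcases hY s with h | h <;> rw [h] <;> norm_num
      simp [h1]
    rw [l2, this]
  have hl2k : l2 k ≤ Real.sqrt n * ω := by
    have h1 : ∑ s, k s ^ 2 ≤ (n : ℝ) * ω ^ 2 := by
      calc ∑ s, k s ^ 2 ≤ ∑ _s : Fin n, ω ^ 2 := by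
            refine Finset.sum_le_sum fun i _ => ?_
            calc k i ^ 2 = |k i| ^ 2 := (sq_abs _).symm
              _ ≤ ω ^ 2 := by
                  exact pow_le_pow_left₀ (abs_nonneg _) (hk i) 2
        _ = (n : ℝ) * ω ^ 2 := by simp [mul_comm]
    calc l2 k ≤ Real.sqrt ((n : ℝ) * ω ^ 2) := Real.sqrt_le_sqrt h1
      _ = Real.sqrt n * ω := by
          rw [Real.sqrt_mul (by positivity), Real.sqrt_sq hω]
  have hwle : l2 w ≤ Real.sqrt n / c := by
    have := hinv Y; rwa [hl2Y] at this
  have hwtle : l2 wt ≤ Real.sqrt n / c := by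
    have := hinvt Y; rwa [hl2Y] at this
  have hMw : M *ᵥ w = Y := by
    rw [hwdef, Matrix.mulVec_mulVec, Matrix.mul_nonsing_inv _ hdet, Matrix.one_mulVec]
  have hMtwt : Mt *ᵥ wt = Y := by
    rw [hwtdef, Matrix.mulVec_mulVec, Matrix.mul_nonsing_inv _ hdett, Matrix.one_mulVec]
  have hdiffvec : wt - w = Mt⁻¹ *ᵥ ((K - Kt) *ᵥ w) := by
    have h1 : Mt *ᵥ (wt - w) = (K - Kt) *ᵥ w := by
      rw [Matrix.mulVec_sub, hMtwt, ← hMw]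
      rw [← Matrix.sub_mulVec]
      congr 1
      rw [hM, hMt]; abel
    calc wt - w = Mt⁻¹ *ᵥ (Mt *ᵥ (wt - w)) := by
          rw [Matrix.mulVec_mulVec, Matrix.nonsing_inv_mul _ hdett, Matrix.one_mulVec]
      _ = Mt⁻¹ *ᵥ ((K - Kt) *ᵥ w) := by rw [h1]
  -- bound on the second difference vector
  have hd2 : l2 (wt - w) ≤ ψ * (Real.sqrt n / c) / c := by
    rw [hdiffvec]
    calc l2 (Mt⁻¹ *ᵥ ((K - Kt) *ᵥ w)) ≤ l2 ((K - Kt) *ᵥ w) / c := hinvt _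
      _ ≤ (ψ * (Real.sqrt n / c)) / c := by
          have hnum : l2 ((K - Kt) *ᵥ w) ≤ ψ * (Real.sqrt n / c) :=
            le_trans (l2_mulVec_le _ _) (mul_le_mul hKdiff hwle (l2_nonneg _) hψ)
          exact div_le_div_of_nonneg_right hnum hpos.le
  have hE : (0 : ℝ) ≤ 2 * Real.sqrt n * σ ^ 2 * B ^ 3 * Real.sqrt d * BL := by positivity
  have hA1 : |(kt - k) ⬝ᵥ wt| ≤
      2 * (n : ℝ) * σ ^ 2 * B ^ 3 * Real.sqrt d * BL / c := by
    calc |(kt - k) ⬝ᵥ wt| ≤ l2 (kt - k) * l2 wt := abs_dot_le _ _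
      _ ≤ (2 * Real.sqrt n * σ ^ 2 * B ^ 3 * Real.sqrt d * BL) * (Real.sqrt n / c) :=
          mul_le_mul hkt hwtle (l2_nonneg _) hE
      _ = 2 * (n : ℝ) * σ ^ 2 * B ^ 3 * Real.sqrt d * BL / c := by
          have h : (2 * Real.sqrt n * σ ^ 2 * B ^ 3 * Real.sqrt d * BL) * (Real.sqrt n / c)
              = 2 * (Real.sqrt n * Real.sqrt n) * σ ^ 2 * B ^ 3 * Real.sqrt d * BL / c := by
            ring
          rw [h, hnn]
  have hA2 : |k ⬝ᵥ (wt - w)| ≤ (n : ℝ) * ω * ψ / c ^ 2 := by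
    calc |k ⬝ᵥ (wt - w)| ≤ l2 k * l2 (wt - w) := abs_dot_le _ _
      _ ≤ (Real.sqrt n * ω) * (ψ * (Real.sqrt n / c) / c) :=
          mul_le_mul hl2k hd2 (l2_nonneg _) (by positivity)
      _ = (n : ℝ) * ω * ψ / c ^ 2 := by
          have hc0 : c ≠ 0 := hpos.ne'
          have h : (Real.sqrt n * ω) * (ψ * (Real.sqrt n / c) / c)
              = (Real.sqrt n * Real.sqrt n) * ω * ψ / c ^ 2 := by
            field_simp
          rw [h, hnn]
  have hsplit : kt ⬝ᵥ wt - k ⬝ᵥ w = (kt - k) ⬝ᵥ wt + k ⬝ᵥ (wt - w) := by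
    rw [sub_dotProduct, dotProduct_sub]
    ring
  have key : |kt ⬝ᵥ wt - k ⬝ᵥ w| ≤
      2 * (n : ℝ) * σ ^ 2 * B ^ 3 * Real.sqrt d * BL / c + (n : ℝ) * ω * ψ / c ^ 2 := by
    rw [hsplit]
    exact le_trans (abs_add_le _ _) (add_le_add hA1 hA2)
  have hgoal : (1 / (n : ℝ)) * (kt ⬝ᵥ wt) - (1 / (n : ℝ)) * (k ⬝ᵥ w)
      = (1 / (n : ℝ)) * (kt ⬝ᵥ wt - k ⬝ᵥ w) := by ring
  rw [hgoal, abs_mul, abs_of_nonneg (by positivity : (0:ℝ) ≤ 1 / (n : ℝ))]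
  calc (1 / (n : ℝ)) * |kt ⬝ᵥ wt - k ⬝ᵥ w|
      ≤ (1 / (n : ℝ)) * (2 * (n : ℝ) * σ ^ 2 * B ^ 3 * Real.sqrt d * BL / c
          + (n : ℝ) * ω * ψ / c ^ 2) := by
        exact mul_le_mul_of_nonneg_left key (by positivity)
    _ = 2 * σ ^ 2 * B ^ 3 * Real.sqrt d * BL / c + ω * ψ / c ^ 2 := by
        field_simp
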